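/- Let q be a prime power, F = GF(q), R the ring of ternions over F, and n ≥ 1. The number of orbits of the action of GL_{n+1}(R) on R^{n+1} (by right multiplication of row vectors by invertible matrices over R) is exactly 5 + q. -/

import Mathlib

set_option synthInstance.maxHeartbeats 1000000
set_option maxHeartbeats 1000000

/-- The ring of ternions over a field `F`: the subring of `2×2` matrices over `F`
consisting of all upper triangular matrices. -/
def ternions (F : Type) [Field F] : Subring (Matrix (Fin 2) (Fin 2) F) where
  carrier := {A | A 1 0 = 0}
  zero_mem' := by simp
  one_mem' := by simp [Matrix.one_apply]
  add_mem' := by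
    intro a b ha hb
    simp only [Set.mem_setOf_eq, Matrix.add_apply] at *
    simp [ha, hb]
  neg_mem' := by
    intro a ha
    simp only [Set.mem_setOf_eq, Matrix.neg_apply] at *
    simp [ha]
  mul_mem' := by
    intro a b ha hb
    simp only [Set.mem_setOf_eq, Matrix.mul_apply, Fin.sum_univ_two] at *
    simp [ha, hb]


set_option linter.unusedSectionVars false
set_option linter.unusedVariables false

namespace TV

variable {F : Type} [Field F]

lemma mem_ternions {A : Matrix (Fin 2) (Fin 2) F} : A ∈ ternions F ↔ A 1 0 = 0 := Iff.rfl

def tern (p r s : F) : ternions F := ⟨!![p, r; 0, s], by simp [mem_ternions]⟩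

def t0 : ternions F →+* F where
  toFun t := t.val 0 0
  map_one' := by simp [Matrix.one_apply]
  map_mul' x y := by
    have hy : y.val 1 0 = 0 := y.prop
    simp [Matrix.mul_apply, Fin.sum_univ_two, hy]
  map_zero' := rfl
  map_add' x y := rfl

def t1 : ternions F →+* F where
  toFun t := t.val 1 1
  map_one' := by simp [Matrix.one_apply]
  map_mul' x y := by
    have hx : x.val 1 0 = 0 := x.prop
    simp [Matrix.mul_apply, Fin.sum_univ_two, hx]
  map_zero' := rfl
  map_add' x y := rfl

def t01 : ternions F →+ F where
  toFun t := t.val 0 1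
  map_zero' := rfl
  map_add' x y := rfl

@[simp] lemma t0_tern (p r s : F) : t0 (tern p r s) = p := rfl
@[simp] lemma t01_tern (p r s : F) : t01 (tern p r s) = r := rfl
@[simp] lemma t1_tern (p r s : F) : t1 (tern p r s) = s := rfl

lemma t01_mul (x y : ternions F) : t01 (x * y) = t0 x * t01 y + t01 x * t1 y := by
  have hx : x.val 1 0 = 0 := x.prop
  have hy : y.val 1 0 = 0 := y.prop
  show ((x.val * y.val)) 0 1 = _
  simp [Matrix.mul_apply, Fin.sum_univ_two, t0, t01, t1]
  rfl

@[simp] lemma t01_one : t01 (1 : ternions F) = 0 := by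
  show (1 : Matrix (Fin 2) (Fin 2) F) 0 1 = 0
  simp [Matrix.one_apply]

lemma ternions_ext {x y : ternions F} (h0 : t0 x = t0 y) (h01 : t01 x = t01 y)
    (h1 : t1 x = t1 y) : x = y := by
  have hx : x.val 1 0 = 0 := x.prop
  have hy : y.val 1 0 = 0 := y.prop
  apply Subtype.ext
  ext i j
  fin_cases i <;> fin_cases j
  · exact h0
  · exact h01
  · show x.val 1 0 = y.val 1 0; rw [hx, hy]
  · exact h1

lemma tern_eta (x : ternions F) : tern (t0 x) (t01 x) (t1 x) = x := by
  apply ternions_ext <;> simp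

end TV

namespace TV
variable {F : Type} [Field F] {m : Type} [Fintype m] [DecidableEq m]

open Matrix

/-- components of a vector of ternions -/
def va (X : m → ternions F) : m → F := fun i => t0 (X i)
def vb (X : m → ternions F) : m → F := fun i => t01 (X i)
def vc (X : m → ternions F) : m → F := fun i => t1 (X i)

lemma vec_ext {X Y : m → ternions F} (h0 : va X = va Y) (h01 : vb X = vb Y)
    (h1 : vc X = vc Y) : X = Y := by
  funext i
  exact ternions_ext (congrFun h0 i) (congrFun h01 i) (congrFun h1 i)

lemma va_vecMul (X : m → ternions F) (A : Matrix m m (ternions F)) :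
    va (X ᵥ* A) = (va X) ᵥ* (A.map t0) := by
  funext j
  simp [va, Matrix.vecMul, dotProduct, map_sum, Matrix.map_apply]

lemma vc_vecMul (X : m → ternions F) (A : Matrix m m (ternions F)) :
    vc (X ᵥ* A) = (vc X) ᵥ* (A.map t1) := by
  funext j
  simp [vc, Matrix.vecMul, dotProduct, map_sum, Matrix.map_apply]

lemma vb_vecMul (X : m → ternions F) (A : Matrix m m (ternions F)) :
    vb (X ᵥ* A) = (va X) ᵥ* (A.map t01) + (vb X) ᵥ* (A.map t1) := by
  funext j
  simp [vb, va, Matrix.vecMul, dotProduct, map_sum, Matrix.map_apply,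
    t01_mul, Finset.sum_add_distrib]

def TMat (P R S : Matrix m m F) : Matrix m m (ternions F) :=
  fun i j => tern (P i j) (R i j) (S i j)

@[simp] lemma TMat_map_t0 (P R S : Matrix m m F) : (TMat P R S).map t0 = P := rfl
@[simp] lemma TMat_map_t01 (P R S : Matrix m m F) : (TMat P R S).map t01 = R := rfl
@[simp] lemma TMat_map_t1 (P R S : Matrix m m F) : (TMat P R S).map t1 = S := rfl

lemma tmat_ext {M N : Matrix m m (ternions F)} (h0 : M.map t0 = N.map t0)
    (h01 : M.map t01 = N.map t01) (h1 : M.map t1 = N.map t1) : M = N := by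
  funext i j
  exact ternions_ext (congrFun (congrFun h0 i) j) (congrFun (congrFun h01 i) j)
    (congrFun (congrFun h1 i) j)

lemma map_t0_mul (M N : Matrix m m (ternions F)) :
    (M * N).map ⇑t0 = M.map t0 * N.map t0 := by
  ext i j
  simp [Matrix.mul_apply, Matrix.map_apply, map_sum]

lemma map_t1_mul (M N : Matrix m m (ternions F)) :
    (M * N).map ⇑t1 = M.map t1 * N.map t1 := by
  ext i j
  simp [Matrix.mul_apply, Matrix.map_apply, map_sum]

lemma map_t01_mul (M N : Matrix m m (ternions F)) :
    (M * N).map ⇑t01 = M.map t0 * N.map t01 + M.map t01 * N.map t1 := by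
  ext i j
  simp [Matrix.mul_apply, Matrix.map_apply, map_sum, t01_mul, Finset.sum_add_distrib]

@[simp] lemma map_one_t0 : (1 : Matrix m m (ternions F)).map ⇑t0 = 1 := by
  ext i j; simp [Matrix.one_apply, Matrix.map_apply, apply_ite]

@[simp] lemma map_one_t1 : (1 : Matrix m m (ternions F)).map ⇑t1 = 1 := by
  ext i j; simp [Matrix.one_apply, Matrix.map_apply, apply_ite]

@[simp] lemma map_one_t01 : (1 : Matrix m m (ternions F)).map ⇑t01 = 0 := by
  ext i j; simp [Matrix.one_apply, Matrix.map_apply, apply_ite]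

lemma isUnit_TMat {P R S : Matrix m m F} (hP : IsUnit P) (hS : IsUnit S) :
    IsUnit (TMat P R S) := by
  obtain ⟨Pu, hPu⟩ := hP
  obtain ⟨Su, hSu⟩ := hS
  set P' : Matrix m m F := ↑Pu⁻¹ with hP'
  set S' : Matrix m m F := ↑Su⁻¹ with hS'
  have hPP' : P * P' = 1 := by rw [← hPu, hP']; exact_mod_cast Pu.mul_inv
  have hP'P : P' * P = 1 := by rw [← hPu, hP']; exact_mod_cast Pu.inv_mul
  have hSS' : S * S' = 1 := by rw [← hSu, hS']; exact_mod_cast Su.mul_inv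
  have hS'S : S' * S = 1 := by rw [← hSu, hS']; exact_mod_cast Su.inv_mul
  refine ⟨⟨TMat P R S, TMat P' (-(P' * R * S')) S', ?_, ?_⟩, rfl⟩
  · apply tmat_ext <;>
      simp [map_t0_mul, map_t01_mul, map_t1_mul, hPP', hSS', Matrix.mul_assoc,
        Matrix.mul_neg, ← Matrix.mul_assoc, hPP']
  · apply tmat_ext <;>
      simp [map_t0_mul, map_t01_mul, map_t1_mul, hP'P, hS'S, Matrix.mul_neg,
        Matrix.mul_assoc, hSS', hS'S]

end TV

namespace TV
open Matrix Submodule Set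

variable {F : Type} [Field F]

lemma exists_linearEquiv {V : Type} [AddCommGroup V] [Module F V] [FiniteDimensional F V]
    {k : ℕ} (v w : Fin k → V) (hv : LinearIndependent F v) (hw : LinearIndependent F w) :
    ∃ g : V ≃ₗ[F] V, ∀ i, g (v i) = w i := by
  set U : Submodule F V := span F (range v) with hU
  set W : Submodule F V := span F (range w) with hW
  obtain ⟨U', hU'⟩ := U.exists_isCompl
  obtain ⟨W', hW'⟩ := W.exists_isCompl
  have hdim : Module.finrank F U' = Module.finrank F W' := by
    have h1 := Submodule.finrank_add_eq_of_isCompl hU'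
    have h2 := Submodule.finrank_add_eq_of_isCompl hW'
    have h3 : Module.finrank F U = k := by
      rw [hU, finrank_span_eq_card hv, Fintype.card_fin]
    have h4 : Module.finrank F W = k := by
      rw [hW, finrank_span_eq_card hw, Fintype.card_fin]
    omega
  obtain ⟨e'⟩ := FiniteDimensional.nonempty_linearEquiv_of_finrank_eq hdim
  let bu : Module.Basis (Fin k) F U := Module.Basis.span hv
  let bw : Module.Basis (Fin k) F W := Module.Basis.span hw
  let e : U ≃ₗ[F] W := bu.equiv bw (Equiv.refl _)
  refine ⟨((Submodule.prodEquivOfIsCompl U U' hU').symm.trans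
    ((e.prodCongr e').trans (Submodule.prodEquivOfIsCompl W W' hW'))), fun i => ?_⟩
  have hvm : v i ∈ U := subset_span ⟨i, rfl⟩
  have h1 : (Submodule.prodEquivOfIsCompl U U' hU').symm (v i) = (⟨v i, hvm⟩, 0) := by
    have := Submodule.prodEquivOfIsCompl_symm_apply_left (p := U) (q := U') hU' ⟨v i, hvm⟩
    simpa using this
  have h2 : (⟨v i, hvm⟩ : U) = bu i := by
    apply Subtype.ext
    simp only [bu]
    rw [Module.Basis.span_apply]
  simp only [LinearEquiv.trans_apply, h1, h2, LinearEquiv.prodCongr_apply, map_zero]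
  have h3 : e (bu i) = bw i := by simpa [e] using bu.equiv_apply bw i (Equiv.refl _)
  rw [show ((e (bu i), (0 : W')) : W × W') = ((bw i : W), 0) by rw [h3]]
  rw [Submodule.coe_prodEquivOfIsCompl' (p := W) (q := W') hW' ((bw i : W), 0)]
  simp only [bw, ZeroMemClass.coe_zero, add_zero]
  rw [Module.Basis.span_apply]

end TV

namespace TV
open Matrix

variable {F : Type} [Field F] {N : ℕ}

lemma exists_vecMul_eq {k : ℕ} (v w : Fin k → (Fin N → F))
    (hv : LinearIndependent F v) (hw : LinearIndependent F w) :
    ∃ S : Matrix (Fin N) (Fin N) F, IsUnit S ∧ ∀ i, v i ᵥ* S = w i := by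
  obtain ⟨g, hg⟩ := exists_linearEquiv v w hv hw
  refine ⟨(LinearMap.toMatrix' (g : (Fin N → F) →ₗ[F] (Fin N → F)))ᵀ, ?_, fun i => ?_⟩
  · rw [Matrix.isUnit_iff_isUnit_det, Matrix.det_transpose]
    have h : LinearMap.toMatrix' (g : (Fin N → F) →ₗ[F] (Fin N → F)) *
        LinearMap.toMatrix' (g.symm : (Fin N → F) →ₗ[F] (Fin N → F)) = 1 := by
      rw [← LinearMap.toMatrix'_comp]
      simp [LinearMap.toMatrix'_id, LinearEquiv.comp_coe]
    have := congrArg Matrix.det h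
    rw [Matrix.det_mul, Matrix.det_one] at this
    exact IsUnit.of_mul_eq_one _ this
  · rw [Matrix.vecMul_transpose, ← Matrix.toLin'_apply, Matrix.toLin'_toMatrix']
    exact hg i

lemma exists_vecMul_single {v w : Fin N → F} (hv : v ≠ 0) (hw : w ≠ 0) :
    ∃ S : Matrix (Fin N) (Fin N) F, IsUnit S ∧ v ᵥ* S = w := by
  have hv' : LinearIndependent F ![v] := by
    apply linearIndependent_unique_iff.mpr
    simpa using hv
  have hw' : LinearIndependent F ![w] := by
    apply linearIndependent_unique_iff.mpr
    simpa using hw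
  obtain ⟨S, hS, h⟩ := exists_vecMul_eq ![v] ![w] hv' hw'
  exact ⟨S, hS, by simpa using h 0⟩

lemma vecMul_cancel {x y : Fin N → F} {M : Matrix (Fin N) (Fin N) F} (hM : IsUnit M)
    (h : x ᵥ* M = y ᵥ* M) : x = y := by
  obtain ⟨u, hu⟩ := hM
  have := congrArg (· ᵥ* (↑u⁻¹ : Matrix (Fin N) (Fin N) F)) h
  have h2 : x ᵥ* ((↑u : Matrix (Fin N) (Fin N) F) * (↑u⁻¹ : Matrix (Fin N) (Fin N) F)) = y ᵥ* ((↑u : Matrix (Fin N) (Fin N) F) * (↑u⁻¹ : Matrix (Fin N) (Fin N) F)) := by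
    simpa [Matrix.vecMul_vecMul, ← hu] using this
  rw [Units.mul_inv] at h2
  simpa using h2

lemma vecMul_eq_zero_iff {x : Fin N → F} {M : Matrix (Fin N) (Fin N) F} (hM : IsUnit M) :
    x ᵥ* M = 0 ↔ x = 0 := by
  constructor
  · intro h
    exact vecMul_cancel hM (by simp [h])
  · intro h; simp [h]

lemma exists_vecMul_any {a : Fin N → F} (ha : a ≠ 0) (u : Fin N → F) :
    ∃ R : Matrix (Fin N) (Fin N) F, a ᵥ* R = u := by
  obtain ⟨i₀, hi₀⟩ := Function.ne_iff.mp ha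
  simp only [Pi.zero_apply] at hi₀
  refine ⟨fun i j => if i = i₀ then (a i₀)⁻¹ * u j else 0, ?_⟩
  funext j
  simp [Matrix.vecMul, dotProduct, mul_ite, Finset.sum_ite_eq, hi₀]

end TV

namespace TV
open Matrix

variable {F : Type} [Field F] {n : ℕ}

def e0 {N : ℕ} : Fin N → F := fun i => if i.val = 0 then 1 else 0
def e1 {N : ℕ} : Fin N → F := fun i => if i.val = 1 then 1 else 0

open Classical in
noncomputable def phi {N : ℕ} (a b c : Fin N → F) : Fin 5 ⊕ F :=
  if a = 0 then
    if b = 0 then (if c = 0 then .inl 2 else .inl 3)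
    else if hc : ∃ μ : F, c = μ • b then .inr hc.choose
    else .inl 4
  else (if c = 0 then .inl 0 else .inl 1)

lemma mu_unique {N : ℕ} {b : Fin N → F} (hb : b ≠ 0) {μ ν : F} (h : μ • b = ν • b) :
    μ = ν := by
  obtain ⟨i, hi⟩ := Function.ne_iff.mp hb
  simp only [Pi.zero_apply] at hi
  have := congrFun h i
  simp only [Pi.smul_apply, smul_eq_mul] at this
  exact mul_right_cancel₀ hi this

def canonA {N : ℕ} (t : Fin 5 ⊕ F) : Fin N → F :=
  match t with
  | .inl i => if i.val = 0 ∨ i.val = 1 then e0 else 0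
  | .inr _ => 0

def canonB {N : ℕ} (t : Fin 5 ⊕ F) : Fin N → F :=
  match t with
  | .inl i => if i.val = 4 then e0 else 0
  | .inr _ => e0

def canonC {N : ℕ} (t : Fin 5 ⊕ F) : Fin N → F :=
  match t with
  | .inl i => if i.val = 1 ∨ i.val = 3 then e0 else if i.val = 4 then e1 else 0
  | .inr μ => μ • e0

lemma e0_ne_zero : (e0 : Fin (n + 1) → F) ≠ 0 := by
  intro h
  have := congrFun h ⟨0, n.succ_pos⟩
  simp [e0] at this

lemma e1_ne_zero (hn : 1 ≤ n) : (e1 : Fin (n + 1) → F) ≠ 0 := by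
  intro h
  have := congrFun h ⟨1, by omega⟩
  simp [e1] at this

lemma smul_e0_ne_zero {μ : F} (hμ : μ ≠ 0) : μ • (e0 : Fin (n + 1) → F) ≠ 0 := by
  intro h
  exact e0_ne_zero (by simpa [hμ] using h)

lemma phi_invariant {N : ℕ} {a b c : Fin N → F} {P R S : Matrix (Fin N) (Fin N) F}
    (hP : IsUnit P) (hS : IsUnit S) :
    phi (a ᵥ* P) (a ᵥ* R + b ᵥ* S) (c ᵥ* S) = phi a b c := by
  by_cases ha : a = 0
  · subst ha
    simp only [Matrix.zero_vecMul, zero_add]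
    by_cases hb : b = 0
    · subst hb
      simp only [Matrix.zero_vecMul]
      by_cases hc : c = 0
      · simp [phi, hc, (vecMul_eq_zero_iff hS).mpr hc]
      · have h2 : ¬ c ᵥ* S = 0 := fun h => hc ((vecMul_eq_zero_iff hS).mp h)
        simp [phi, hc, h2]
    · have hb' : b ᵥ* S ≠ 0 := fun h => hb ((vecMul_eq_zero_iff hS).mp h)
      have hiff : (∃ μ : F, c ᵥ* S = μ • (b ᵥ* S)) ↔ (∃ μ : F, c = μ • b) := by
        constructor
        · rintro ⟨μ, h⟩
          refine ⟨μ, vecMul_cancel hS ?_⟩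
          rw [h, Matrix.smul_vecMul]
        · rintro ⟨μ, h⟩
          exact ⟨μ, by rw [h, Matrix.smul_vecMul]⟩
      unfold phi
      rw [if_pos rfl, if_pos rfl, if_neg hb, if_neg hb']
      by_cases hc : ∃ μ : F, c = μ • b
      · have hc' := hiff.mpr hc
        rw [dif_pos hc, dif_pos hc']
        have h1 : c = hc'.choose • b := by
          apply vecMul_cancel hS
          rw [Matrix.smul_vecMul]
          exact hc'.choose_spec
        have h2 : c = hc.choose • b := hc.choose_spec
        rw [mu_unique (b := b) hb (h2.symm.trans h1)]
      · rw [dif_neg (fun h => hc (hiff.mp h)), dif_neg hc]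
  · have ha' : a ᵥ* P ≠ 0 := fun h => ha ((vecMul_eq_zero_iff hP).mp h)
    by_cases hc : c = 0
    · simp [phi, ha, ha', hc, (vecMul_eq_zero_iff hS).mpr hc]
    · have h2 : ¬ c ᵥ* S = 0 := fun h => hc ((vecMul_eq_zero_iff hS).mp h)
      simp [phi, ha, ha', hc, h2]

lemma phi_canon (hn : 1 ≤ n) (t : Fin 5 ⊕ F) :
    phi (canonA t : Fin (n + 1) → F) (canonB t) (canonC t) = t := by
  have he0 : (e0 : Fin (n + 1) → F) ≠ 0 := e0_ne_zero
  have he1 : (e1 : Fin (n + 1) → F) ≠ 0 := e1_ne_zero hn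
  have hne : ¬ ∃ μ : F, (e1 : Fin (n + 1) → F) = μ • e0 := by
    rintro ⟨μ, h⟩
    have := congrFun h ⟨1, by omega⟩
    simp [e0, e1] at this
  rcases t with i | μ
  · fin_cases i
    · show phi (e0 : Fin (n + 1) → F) 0 0 = Sum.inl 0
      unfold phi
      rw [if_neg he0, if_pos rfl]
    · show phi (e0 : Fin (n + 1) → F) 0 e0 = Sum.inl 1
      unfold phi
      rw [if_neg he0, if_neg he0]
    · show phi (0 : Fin (n + 1) → F) 0 0 = Sum.inl 2
      unfold phi
      rw [if_pos rfl, if_pos rfl, if_pos rfl]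
    · show phi (0 : Fin (n + 1) → F) 0 e0 = Sum.inl 3
      unfold phi
      rw [if_pos rfl, if_pos rfl, if_neg he0]
    · show phi (0 : Fin (n + 1) → F) e0 e1 = Sum.inl 4
      unfold phi
      rw [if_pos rfl, if_neg he0, dif_neg hne]
  · show phi (0 : Fin (n + 1) → F) e0 (μ • e0) = Sum.inr μ
    have hex : ∃ ν : F, μ • (e0 : Fin (n + 1) → F) = ν • e0 := ⟨μ, rfl⟩
    unfold phi
    rw [if_pos rfl, if_neg he0, dif_pos hex]
    exact congrArg Sum.inr (mu_unique he0 hex.choose_spec).symm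

section canonEval
variable {N : ℕ}
@[simp] lemma canonA_inl0 : (canonA (Sum.inl 0) : Fin N → F) = e0 := rfl
@[simp] lemma canonA_inl1 : (canonA (Sum.inl 1) : Fin N → F) = e0 := rfl
@[simp] lemma canonA_inl2 : (canonA (Sum.inl 2) : Fin N → F) = 0 := rfl
@[simp] lemma canonA_inl3 : (canonA (Sum.inl 3) : Fin N → F) = 0 := rfl
@[simp] lemma canonA_inl4 : (canonA (Sum.inl 4) : Fin N → F) = 0 := rfl
@[simp] lemma canonA_inr (μ : F) : (canonA (Sum.inr μ) : Fin N → F) = 0 := rfl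
@[simp] lemma canonB_inl0 : (canonB (Sum.inl 0) : Fin N → F) = 0 := rfl
@[simp] lemma canonB_inl1 : (canonB (Sum.inl 1) : Fin N → F) = 0 := rfl
@[simp] lemma canonB_inl2 : (canonB (Sum.inl 2) : Fin N → F) = 0 := rfl
@[simp] lemma canonB_inl3 : (canonB (Sum.inl 3) : Fin N → F) = 0 := rfl
@[simp] lemma canonB_inl4 : (canonB (Sum.inl 4) : Fin N → F) = e0 := rfl
@[simp] lemma canonB_inr (μ : F) : (canonB (Sum.inr μ) : Fin N → F) = e0 := rfl
@[simp] lemma canonC_inl0 : (canonC (Sum.inl 0) : Fin N → F) = 0 := rfl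
@[simp] lemma canonC_inl1 : (canonC (Sum.inl 1) : Fin N → F) = e0 := rfl
@[simp] lemma canonC_inl2 : (canonC (Sum.inl 2) : Fin N → F) = 0 := rfl
@[simp] lemma canonC_inl3 : (canonC (Sum.inl 3) : Fin N → F) = e0 := rfl
@[simp] lemma canonC_inl4 : (canonC (Sum.inl 4) : Fin N → F) = e1 := rfl
@[simp] lemma canonC_inr (μ : F) : (canonC (Sum.inr μ) : Fin N → F) = μ • e0 := rfl
end canonEval

lemma indep_e0_e1 (hn : 1 ≤ n) : LinearIndependent F ![(e0 : Fin (n + 1) → F), e1] := by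
  rw [linearIndependent_fin2]
  constructor
  · simpa using e1_ne_zero (F := F) hn
  · intro μ h
    have := congrFun h ⟨0, n.succ_pos⟩
    simp [e0, e1] at this

lemma reach (hn : 1 ≤ n) (a b c : Fin (n + 1) → F) :
    ∃ P R S : Matrix (Fin (n + 1)) (Fin (n + 1)) F, IsUnit P ∧ IsUnit S ∧
      a ᵥ* P = canonA (phi a b c) ∧ a ᵥ* R + b ᵥ* S = canonB (phi a b c) ∧
      c ᵥ* S = canonC (phi a b c) := by
  have he0 : (e0 : Fin (n + 1) → F) ≠ 0 := e0_ne_zero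
  by_cases ha : a = 0
  · subst ha
    by_cases hb : b = 0
    · subst hb
      by_cases hc : c = 0
      · subst hc
        have hphi : phi (0 : Fin (n + 1) → F) 0 0 = Sum.inl 2 := by
          unfold phi; rw [if_pos rfl, if_pos rfl, if_pos rfl]
        refine ⟨1, 0, 1, isUnit_one, isUnit_one, ?_, ?_, ?_⟩ <;>
          simp [hphi]
      · have hphi : phi (0 : Fin (n + 1) → F) 0 c = Sum.inl 3 := by
          unfold phi; rw [if_pos rfl, if_pos rfl, if_neg hc]
        obtain ⟨S, hS, hcS⟩ := exists_vecMul_single hc he0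
        refine ⟨1, 0, S, isUnit_one, hS, ?_, ?_, ?_⟩ <;>
          simp [hphi, hcS]
    · by_cases hc : ∃ μ : F, c = μ • b
      · have hphi : phi (0 : Fin (n + 1) → F) b c = Sum.inr hc.choose := by
          unfold phi; rw [if_pos rfl, if_neg hb, dif_pos hc]
        obtain ⟨S, hS, hbS⟩ := exists_vecMul_single hb he0
        refine ⟨1, 0, S, isUnit_one, hS, ?_, ?_, ?_⟩
        · simp [hphi]
        · simp [hphi, hbS]
        · rw [hphi]
          show c ᵥ* S = hc.choose • e0
          have hrw : c ᵥ* S = (hc.choose • b) ᵥ* S := congrArg (· ᵥ* S) hc.choose_spec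
          rw [hrw, Matrix.smul_vecMul, hbS]
      · have hphi : phi (0 : Fin (n + 1) → F) b c = Sum.inl 4 := by
          unfold phi; rw [if_pos rfl, if_neg hb, dif_neg hc]
        have hcne : c ≠ 0 := by
          intro h
          exact hc ⟨0, by simp [h]⟩
        have hli : LinearIndependent F ![b, c] := by
          rw [linearIndependent_fin2]
          refine ⟨by simpa using hcne, fun μ h => ?_⟩
          simp only [Matrix.cons_val_one, Matrix.head_cons, Matrix.cons_val_zero] at h
          by_cases hμ : μ = 0
          · exact hb (by simp [hμ] at h; exact h.symm)
          · exact hc ⟨μ⁻¹, by rw [← h, smul_smul, inv_mul_cancel₀ hμ, one_smul]⟩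
        obtain ⟨S, hS, hiS⟩ := exists_vecMul_eq ![b, c] ![e0, e1] hli (indep_e0_e1 hn)
        have h0 := hiS 0
        have h1 := hiS 1
        simp only [Matrix.cons_val_zero, Matrix.cons_val_one, Matrix.head_cons] at h0 h1
        refine ⟨1, 0, S, isUnit_one, hS, ?_, ?_, ?_⟩
        · simp [hphi]
        · simp [hphi, h0]
        · simp [hphi, h1]
  · obtain ⟨P, hP, haP⟩ := exists_vecMul_single ha he0
    by_cases hc : c = 0
    · subst hc
      have hphi : phi a b (0 : Fin (n + 1) → F) = Sum.inl 0 := by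
        unfold phi; rw [if_neg ha, if_pos rfl]
      obtain ⟨R, hR⟩ := exists_vecMul_any ha (-b)
      refine ⟨P, R, 1, hP, isUnit_one, ?_, ?_, ?_⟩
      · simp [hphi, haP]
      · simp [hphi, hR]
      · simp [hphi]
    · have hphi : phi a b c = Sum.inl 1 := by
        unfold phi; rw [if_neg ha, if_neg hc]
      obtain ⟨S, hS, hcS⟩ := exists_vecMul_single hc he0
      obtain ⟨R, hR⟩ := exists_vecMul_any ha (-(b ᵥ* S))
      refine ⟨P, R, S, hP, hS, ?_, ?_, ?_⟩
      · simp [hphi, haP]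
      · simp [hphi, hR]
      · simp [hphi, hcS]

end TV


namespace TV
open Matrix

variable {F : Type} [Field F]

noncomputable def fX {N : ℕ} (X : Fin N → ternions F) : Fin 5 ⊕ F :=
  phi (va X) (vb X) (vc X)

def canonX {N : ℕ} (t : Fin 5 ⊕ F) : Fin N → ternions F :=
  fun i => tern (canonA t i) (canonB t i) (canonC t i)

lemma va_canonX {N : ℕ} (t : Fin 5 ⊕ F) : va (canonX t : Fin N → ternions F) = canonA t :=
  funext fun i => by simp [va, canonX]

lemma vb_canonX {N : ℕ} (t : Fin 5 ⊕ F) : vb (canonX t : Fin N → ternions F) = canonB t :=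
  funext fun i => by simp [vb, canonX]

lemma vc_canonX {N : ℕ} (t : Fin 5 ⊕ F) : vc (canonX t : Fin N → ternions F) = canonC t :=
  funext fun i => by simp [vc, canonX]

lemma isUnit_map_t0 {N : ℕ} (A : (Matrix (Fin N) (Fin N) (ternions F))ˣ) :
    IsUnit ((A.val).map ⇑(t0 : ternions F →+* F)) := by
  refine ⟨⟨A.val.map t0, A.inv.map t0, ?_, ?_⟩, rfl⟩
  · rw [← map_t0_mul, A.val_inv, map_one_t0]
  · rw [← map_t0_mul, A.inv_val, map_one_t0]

lemma isUnit_map_t1 {N : ℕ} (A : (Matrix (Fin N) (Fin N) (ternions F))ˣ) :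
    IsUnit ((A.val).map ⇑(t1 : ternions F →+* F)) := by
  refine ⟨⟨A.val.map t1, A.inv.map t1, ?_, ?_⟩, rfl⟩
  · rw [← map_t1_mul, A.val_inv, map_one_t1]
  · rw [← map_t1_mul, A.inv_val, map_one_t1]

lemma fX_invariant {N : ℕ} (X : Fin N → ternions F)
    (A : (Matrix (Fin N) (Fin N) (ternions F))ˣ) :
    fX (X ᵥ* A.val) = fX X := by
  unfold fX
  rw [va_vecMul, vb_vecMul, vc_vecMul]
  exact phi_invariant (isUnit_map_t0 A) (isUnit_map_t1 A)

lemma reach' {n : ℕ} (hn : 1 ≤ n) (X : Fin (n + 1) → ternions F) :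
    ∃ A : (Matrix (Fin (n + 1)) (Fin (n + 1)) (ternions F))ˣ,
      X ᵥ* A.val = canonX (fX X) := by
  obtain ⟨P, R, S, hP, hS, h1, h2, h3⟩ := reach hn (va X) (vb X) (vc X)
  obtain ⟨u, hu⟩ := isUnit_TMat hP hS
  refine ⟨u, ?_⟩
  rw [hu]
  apply vec_ext
  · rw [va_vecMul, TMat_map_t0, h1, va_canonX]; rfl
  · rw [vb_vecMul, TMat_map_t01, TMat_map_t1, h2, vb_canonX]; rfl
  · rw [vc_vecMul, TMat_map_t1, h3, vc_canonX]; rfl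

lemma fX_canonX {n : ℕ} (hn : 1 ≤ n) (t : Fin 5 ⊕ F) :
    fX (canonX t : Fin (n + 1) → ternions F) = t := by
  unfold fX
  rw [va_canonX, vb_canonX, vc_canonX]
  exact phi_canon hn t

end TV

/-- Over `F = GF(q)`, the action of `GL_{n+1}(R)` on `R^{n+1}` (by right multiplication
of row vectors) has exactly `5 + q` orbits. -/
theorem ternion_vector_orbit_count (F : Type) [Field F] [Fintype F] (q n : ℕ)
    (hq : Fintype.card F = q) (hn : 1 ≤ n) :
    Nat.card (Quot (fun X Y : Fin (n + 1) → ternions F =>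
      ∃ A : (Matrix (Fin (n + 1)) (Fin (n + 1)) (ternions F))ˣ,
        Matrix.vecMul X A.val = Y)) = 5 + q := by
  have e : Quot (fun X Y : Fin (n + 1) → ternions F =>
      ∃ A : (Matrix (Fin (n + 1)) (Fin (n + 1)) (ternions F))ˣ,
        Matrix.vecMul X A.val = Y) ≃ (Fin 5 ⊕ F) :=
    { toFun := Quot.lift TV.fX (fun X Y h => by
        obtain ⟨A, hA⟩ := h
        rw [← hA]
        exact (TV.fX_invariant X A).symm)
      invFun := fun t => Quot.mk _ (TV.canonX t)
      left_inv := by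
        apply Quot.ind
        intro X
        exact (Quot.sound (TV.reach' hn X)).symm
      right_inv := fun t => TV.fX_canonX hn t }
  rw [Nat.card_congr e, Nat.card_eq_fintype_card, Fintype.card_sum, Fintype.card_fin, hq]
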